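/- arXiv:2103.12141 — 2 statements merged into one kernel-verified Lean document; each statement's English description precedes it below -/
import Mathlib

section
/- (Output-ellipsoid containment theorem) Suppose z ∈ ℝ^N satisfies [z;1]ᵀPᵢ[z;1] ≥ 0 for i = 1,…,q and [z;1]ᵀP_mid[z;1] ≥ 0, and the output is w = W z̃ + b where z̃ = Sz for a matrix S. If there exist τᵢ ≥ 0, a symmetric positive definite U, and V such that Σᵢ τᵢPᵢ + P_mid + GᵀΘG ⪯ 0, where G = [[WS, b],[0, 1]] and Θ = [[U², UV],[VᵀU, VᵀV−1]], then w ∈ E(−U⁻¹V, U⁻²). -/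
open Matrix

theorem output_ellipsoid_containment
    (N q r m : ℕ) (z : Fin N → ℝ)
    (P : Fin q → Matrix (Fin N ⊕ Unit) (Fin N ⊕ Unit) ℝ)
    (Pmid : Matrix (Fin N ⊕ Unit) (Fin N ⊕ Unit) ℝ)
    (hP : ∀ i, 0 ≤ (Sum.elim z fun _ => (1 : ℝ)) ⬝ᵥ (P i).mulVec (Sum.elim z fun _ => (1 : ℝ)))
    (hPmid : 0 ≤ (Sum.elim z fun _ => (1 : ℝ)) ⬝ᵥ Pmid.mulVec (Sum.elim z fun _ => (1 : ℝ)))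
    (W : Matrix (Fin m) (Fin r) ℝ) (S : Matrix (Fin r) (Fin N) ℝ) (b : Fin m → ℝ)
    (w : Fin m → ℝ) (hw : w = W.mulVec (S.mulVec z) + b)
    (τ : Fin q → ℝ) (hτ : ∀ i, 0 ≤ τ i)
    (U : Matrix (Fin m) (Fin m) ℝ) (hU : U.PosDef) (hUsymm : U.IsSymm)
    (V : Fin m → ℝ)
    (G : Matrix (Fin m ⊕ Unit) (Fin N ⊕ Unit) ℝ)
    (hG : G = Matrix.fromBlocks (W * S)
        (Matrix.of fun i (_ : Unit) => b i)
        (0 : Matrix Unit (Fin N) ℝ)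
        (Matrix.of fun (_ : Unit) (_ : Unit) => (1 : ℝ)))
    (Θ : Matrix (Fin m ⊕ Unit) (Fin m ⊕ Unit) ℝ)
    (hΘ : Θ = Matrix.fromBlocks (U * U)
        (Matrix.of fun i (_ : Unit) => U.mulVec V i)
        (Matrix.of fun (_ : Unit) j => U.mulVec V j)
        (Matrix.of fun (_ : Unit) (_ : Unit) => V ⬝ᵥ V - 1))
    (hNSD : (-(∑ i, τ i • P i + Pmid + Gᵀ * Θ * G)).PosSemidef) :
    (w + U⁻¹.mulVec V) ⬝ᵥ (U * U).mulVec (w + U⁻¹.mulVec V) ≤ 1 := by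

  have hdet : IsUnit U.det := isUnit_iff_ne_zero.mpr hU.det_pos.ne'
  have hUU1 : U * U⁻¹ = 1 := Matrix.mul_nonsing_inv U hdet
  have hU1U : U⁻¹ * U = 1 := Matrix.nonsing_inv_mul U hdet
  set ξ : (Fin N ⊕ Unit) → ℝ := Sum.elim z (fun _ => (1 : ℝ)) with hξ
  -- S-procedure: the quadratic form of the NSD matrix is ≤ 0
  have h1 : ξ ⬝ᵥ (∑ i, τ i • P i + Pmid + Gᵀ * Θ * G).mulVec ξ ≤ 0 := by
    have h := hNSD.dotProduct_mulVec_nonneg ξ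
    rw [Matrix.neg_mulVec, dotProduct_neg] at h
    simp only [star_trivial] at h
    linarith
  have h2 : 0 ≤ ξ ⬝ᵥ (∑ i, τ i • P i).mulVec ξ := by
    have hsum : (∑ i, τ i • P i) *ᵥ ξ = ∑ i, τ i • ((P i) *ᵥ ξ) := by
      ext j
      simp only [Matrix.mulVec, dotProduct, Finset.sum_apply, Matrix.sum_apply,
        Matrix.smul_apply, Pi.smul_apply, smul_eq_mul, Finset.mul_sum, Finset.sum_mul]
      rw [Finset.sum_comm]
      exact Finset.sum_congr rfl fun i _ => Finset.sum_congr rfl fun a _ => by ring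
    have hdot : ξ ⬝ᵥ (∑ i, τ i • ((P i) *ᵥ ξ)) = ∑ i, τ i * (ξ ⬝ᵥ (P i *ᵥ ξ)) := by
      simp only [dotProduct, Finset.sum_apply, Pi.smul_apply, smul_eq_mul, Finset.mul_sum]
      rw [Finset.sum_comm]
      exact Finset.sum_congr rfl fun i _ => Finset.sum_congr rfl fun a _ => by ring
    rw [hsum, hdot]
    exact Finset.sum_nonneg fun i _ => mul_nonneg (hτ i) (hP i)
  have h3 : ξ ⬝ᵥ (Gᵀ * Θ * G).mulVec ξ ≤ 0 := by
    rw [Matrix.add_mulVec, Matrix.add_mulVec, dotProduct_add, dotProduct_add] at h1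
    linarith
  -- compute G ξ
  have hy : G.mulVec ξ = Sum.elim w (fun _ => (1 : ℝ)) := by
    subst hG hw
    rw [hξ, Matrix.fromBlocks_mulVec]
    ext (i | i) <;>
      simp [Matrix.mulVec, dotProduct, Matrix.mul_apply, Finset.mul_sum, Finset.sum_mul,
        mul_comm, mul_left_comm]
  -- rewrite the quadratic form through G
  have h4 : (Sum.elim w (fun _ => (1:ℝ))) ⬝ᵥ Θ.mulVec (Sum.elim w (fun _ => (1:ℝ))) ≤ 0 := by
    have : ξ ⬝ᵥ (Gᵀ * Θ * G).mulVec ξ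
        = (G.mulVec ξ) ⬝ᵥ Θ.mulVec (G.mulVec ξ) := by
      rw [Matrix.mul_assoc, ← Matrix.mulVec_mulVec, Matrix.dotProduct_mulVec,
        Matrix.vecMul_transpose, ← Matrix.mulVec_mulVec, Matrix.dotProduct_mulVec]
    rw [this, hy] at h3
    exact h3
  -- unfold the block quadratic form
  have h5 : w ⬝ᵥ (U * U).mulVec w + w ⬝ᵥ U.mulVec V + ((U.mulVec V) ⬝ᵥ w + (V ⬝ᵥ V - 1)) ≤ 0 := by
    have hexp : (Sum.elim w (fun _ => (1:ℝ))) ⬝ᵥ Θ.mulVec (Sum.elim w (fun _ => (1:ℝ)))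
        = w ⬝ᵥ (U * U).mulVec w + w ⬝ᵥ U.mulVec V + ((U.mulVec V) ⬝ᵥ w + (V ⬝ᵥ V - 1)) := by
      subst hΘ
      simp [Matrix.mulVec, Matrix.fromBlocks, dotProduct, Fintype.sum_sum_type,
        Finset.sum_add_distrib, Finset.mul_sum, mul_add, Finset.sum_mul, mul_comm,
        mul_left_comm]
    rw [hexp] at h4
    exact h4
  -- inverse facts
  have key1 : (U * U).mulVec (U⁻¹.mulVec V) = U.mulVec V := by
    rw [Matrix.mulVec_mulVec, Matrix.mul_assoc, hUU1, Matrix.mul_one]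
  have key3 : (U⁻¹.mulVec V) ⬝ᵥ (U * U).mulVec w = w ⬝ᵥ U.mulVec V := by
    rw [Matrix.dotProduct_mulVec]
    have hv : (U * U).vecMul (U⁻¹.mulVec V) = U.mulVec V := by
      rw [← Matrix.mulVec_transpose, Matrix.transpose_mul, hUsymm.eq, ← key1]
    rw [hv, dotProduct_comm]
  have key2 : (U⁻¹.mulVec V) ⬝ᵥ (U * U).mulVec (U⁻¹.mulVec V) = V ⬝ᵥ V := by
    rw [key1, Matrix.dotProduct_mulVec]
    have hv : U.vecMul (U⁻¹.mulVec V) = V := by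
      rw [← Matrix.mulVec_transpose, hUsymm.eq, Matrix.mulVec_mulVec, hUU1,
        Matrix.one_mulVec]
    rw [hv]
  have key4 : w ⬝ᵥ (U * U).mulVec (U⁻¹.mulVec V) = w ⬝ᵥ U.mulVec V := by rw [key1]
  have hcomm : (U.mulVec V) ⬝ᵥ w = w ⬝ᵥ U.mulVec V := dotProduct_comm _ _
  rw [add_dotProduct, Matrix.mulVec_add, dotProduct_add, dotProduct_add, key2, key3, key4]
  linarith
end

section
/- Under the detector of Definition 1, if the noise realizations v_{k−N},…,v_k, v_{k+1} all lie within their confidence ellipsoids E(0, Σ̄), and the prediction bound E(μ̂, Σ̂) is a guaranteed outer bound (i.e., the neural network output on any inputs from the input confidence ellipsoids lies in E(μ̂, Σ̂)), and the ideal prediction equals the ideal next measurement, then no alarm is raised: y_{k+1} ∈ E(μ̂, Σ̂) ⊕ E(0, Σ̄). Consequently the false alarm probability is at most 1 − p̄^{N+2}. -/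
open Matrix MeasureTheory ProbabilityTheory

theorem detector_false_alarm_bound
    {Ω : Type*} [MeasurableSpace Ω] (P : Measure Ω) [IsProbabilityMeasure P]
    (p N : ℕ)
    (Sbar Shat : Matrix (Fin p) (Fin p) ℝ) (hSbar : Sbar.PosDef) (hShat : Shat.PosDef)
    (μhat : Fin p → ℝ)
    (ystar : Fin (N + 2) → (Fin p → ℝ))
    (v : Fin (N + 2) → Ω → (Fin p → ℝ))
    (hmeas : ∀ j, Measurable (v j))
    (hindep : iIndepFun v P)
    (pbar : ENNReal) (hpbar : pbar ≤ 1)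
    (hconf : ∀ j, pbar ≤ P {ω | (v j ω) ⬝ᵥ Sbar⁻¹.mulVec (v j ω) ≤ 1})
    (y : Fin (N + 2) → Ω → (Fin p → ℝ)) (hy : ∀ j ω, y j ω = ystar j + v j ω)
    (f : (Fin (N + 1) → (Fin p → ℝ)) → (Fin p → ℝ))
    -- soundness of the prediction bound: whenever each ideal input lies in the
    -- confidence ellipsoid around the corresponding actual measurement, the
    -- network output on the ideal inputs lies in the prediction bound
    (hsound : ∀ ω, (∀ j : Fin (N + 1),
        (ystar j.castSucc - y j.castSucc ω) ⬝ᵥ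
          Sbar⁻¹.mulVec (ystar j.castSucc - y j.castSucc ω) ≤ 1) →
        ((f fun j => ystar j.castSucc) - μhat) ⬝ᵥ
          Shat⁻¹.mulVec ((f fun j => ystar j.castSucc) - μhat) ≤ 1)
    -- accuracy: the ideal prediction equals the ideal next measurement
    (hacc : (f fun j => ystar j.castSucc) = ystar (Fin.last (N + 1))) :
    -- (1) deterministic: if all noise realizations are in their confidence
    -- ellipsoids, no alarm is raised
    (∀ ω, (∀ j : Fin (N + 2), (v j ω) ⬝ᵥ Sbar⁻¹.mulVec (v j ω) ≤ 1) →
        ∃ s1, (s1 - μhat) ⬝ᵥ Shat⁻¹.mulVec (s1 - μhat) ≤ 1 ∧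
        ∃ s2, s2 ⬝ᵥ Sbar⁻¹.mulVec s2 ≤ 1 ∧
          y (Fin.last (N + 1)) ω = s1 + s2) ∧
    -- (2) the false alarm probability is at most 1 - pbar^(N+2)
    P {ω | ¬ ∃ s1, (s1 - μhat) ⬝ᵥ Shat⁻¹.mulVec (s1 - μhat) ≤ 1 ∧
        ∃ s2, s2 ⬝ᵥ Sbar⁻¹.mulVec s2 ≤ 1 ∧
          y (Fin.last (N + 1)) ω = s1 + s2} ≤ 1 - pbar ^ (N + 2) := by
  have key : ∀ ω, (∀ j : Fin (N + 2), (v j ω) ⬝ᵥ Sbar⁻¹.mulVec (v j ω) ≤ 1) →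
      ∃ s1, (s1 - μhat) ⬝ᵥ Shat⁻¹.mulVec (s1 - μhat) ≤ 1 ∧
      ∃ s2, s2 ⬝ᵥ Sbar⁻¹.mulVec s2 ≤ 1 ∧
        y (Fin.last (N + 1)) ω = s1 + s2 := by
    intro ω hω
    refine ⟨f fun j => ystar j.castSucc, ?_, v (Fin.last (N + 1)) ω,
      hω (Fin.last (N + 1)), ?_⟩
    · apply hsound
      intro j
      have : ystar j.castSucc - y j.castSucc ω = -(v j.castSucc ω) := by
        rw [hy]; abel
      rw [this]
      simpa [Matrix.mulVec_neg] using hω j.castSucc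
    · rw [hacc, hy]
  refine ⟨key, ?_⟩
  -- measurability of the ellipsoid set
  have hqm : Measurable fun x : Fin p → ℝ => x ⬝ᵥ Sbar⁻¹.mulVec x := by
    simp only [dotProduct, Matrix.mulVec]
    exact Finset.measurable_sum _ fun i _ => by
      exact (measurable_pi_apply i).mul (Finset.measurable_sum _ fun k _ =>
        (measurable_pi_apply k).const_mul _)
  have hSet : MeasurableSet {x : Fin p → ℝ | x ⬝ᵥ Sbar⁻¹.mulVec x ≤ 1} :=
    measurableSet_le hqm measurable_const
  set A : Fin (N + 2) → Set Ω :=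
    fun j => {ω | (v j ω) ⬝ᵥ Sbar⁻¹.mulVec (v j ω) ≤ 1} with hA
  have hAm : ∀ j, MeasurableSet (A j) := fun j => (hmeas j) hSet
  have hInter : P (⋂ j, A j) = ∏ j, P (A j) := by
    refine hindep.meas_iInter fun j => ?_
    exact ⟨{x | x ⬝ᵥ Sbar⁻¹.mulVec x ≤ 1}, hSet, rfl⟩
  have hsub : {ω | ¬ ∃ s1, (s1 - μhat) ⬝ᵥ Shat⁻¹.mulVec (s1 - μhat) ≤ 1 ∧
      ∃ s2, s2 ⬝ᵥ Sbar⁻¹.mulVec s2 ≤ 1 ∧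
        y (Fin.last (N + 1)) ω = s1 + s2} ⊆ (⋂ j, A j)ᶜ := by
    intro ω hω hmem
    exact hω (key ω fun j => Set.mem_iInter.mp hmem j)
  calc P _ ≤ P (⋂ j, A j)ᶜ := measure_mono hsub
    _ = 1 - P (⋂ j, A j) :=
        prob_compl_eq_one_sub (MeasurableSet.iInter hAm)
    _ ≤ 1 - pbar ^ (N + 2) := by
        apply tsub_le_tsub_left
        rw [hInter]
        calc pbar ^ (N + 2) = ∏ _j : Fin (N + 2), pbar := by
              simp [Finset.prod_const]
          _ ≤ ∏ j, P (A j) := Finset.prod_le_prod' fun j _ => hconf j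
end
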